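/- Let f : ℝⁿ → ℝ be locally Lipschitz and suppose f is lower-C¹ at x in the sense that for every ε > 0 there is δ > 0 with f(ty+(1-t)z) ≤ t f(y)+(1-t) f(z)+ε t(1-t)‖y−z‖ for all y,z ∈ B(x,δ), t ∈ [0,1]. Fix c > 0. Then for all sequences x_j → x, y_j → x with y_j ≠ x_j, there exist ε_j → 0⁺ such that f(y_j) ≤ m_j(y_j) + ε_j‖y_j − x_j‖, where m_j is the downshifted tangent plane m_j(·) = f(y_j) + g_jᵀ(·−y_j) − s_j, g_j ∈ ∂f(y_j), s_j = [f(y_j)+g_jᵀ(x_j−y_j) − f(x_j) + c‖y_j−x_j‖²]₊. -/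

import Mathlib

open Metric Set Filter
open scoped Topology RealInnerProductSpace

/-- The Clarke directional derivative of `f` at `x` in direction `d`. -/
noncomputable def clarkeDeriv {E : Type*} [NormedAddCommGroup E] [NormedSpace ℝ E]
    (f : E → ℝ) (x d : E) : ℝ :=
  Filter.limsup (fun p : E × ℝ => (f (p.1 + p.2 • d) - f p.1) / p.2)
    ((nhds x) ×ˢ (nhdsWithin 0 (Set.Ioi 0)))

lemma clarke_upper {E : Type*} [NormedAddCommGroup E] [NormedSpace ℝ E]
    (f : E → ℝ) (hfc : Continuous f) (x : E) (δ : ℝ) (K : NNReal)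
    (hK : LipschitzOnWith K f (ball x δ)) (ε : ℝ) (hε : 0 ≤ ε)
    (hconv : ∀ y ∈ ball x δ, ∀ z ∈ ball x δ, ∀ t ∈ Icc (0:ℝ) 1,
      f (t • y + (1 - t) • z) ≤ t * f y + (1 - t) * f z + ε * (t * (1 - t)) * ‖y - z‖)
    (y z' : E) (hy : y ∈ ball x δ) (hz' : z' ∈ ball x δ) :
    clarkeDeriv f y (z' - y) ≤ f z' - f y + ε * ‖z' - y‖ := by
  set d := z' - y with hd
  have hyd : y + d = z' := by simp [hd]
  have h1 : ∀ᶠ p : E × ℝ in (𝓝 y) ×ˢ (𝓝[>] (0:ℝ)), p.1 ∈ ball x δ :=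
    Filter.Eventually.prod_inl (isOpen_ball.eventually_mem hy) _
  have h3 : ∀ᶠ p : E × ℝ in (𝓝 y) ×ˢ (𝓝[>] (0:ℝ)), p.2 ∈ Ioi (0:ℝ) :=
    Filter.Eventually.prod_inr eventually_mem_nhdsWithin _
  have h5 : ∀ᶠ p : E × ℝ in (𝓝 y) ×ˢ (𝓝[>] (0:ℝ)), p.2 ≤ 1 := by
    have hev : ∀ᶠ t in 𝓝[>] (0:ℝ), t ≤ 1 :=
      nhdsWithin_le_nhds (eventually_le_nhds (by norm_num))
    exact hev.prod_inr _
  have htend : Tendsto (fun p : E × ℝ => p.1 + p.2 • d) ((𝓝 y) ×ˢ (𝓝[>] (0:ℝ))) (𝓝 y) := by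
    have h := (tendsto_fst (f := 𝓝 y) (g := 𝓝[>] (0:ℝ))).add
      ((tendsto_snd.mono_right nhdsWithin_le_nhds).smul_const d)
    simpa using h
  have h2 : ∀ᶠ p : E × ℝ in (𝓝 y) ×ˢ (𝓝[>] (0:ℝ)), p.1 + p.2 • d ∈ ball x δ :=
    htend.eventually (isOpen_ball.eventually_mem hy)
  have hcobdd : Filter.IsCoboundedUnder (· ≤ ·) ((𝓝 y) ×ˢ (𝓝[>] (0:ℝ)))
      (fun p : E × ℝ => (f (p.1 + p.2 • d) - f p.1) / p.2) := by
    have hbdd : Filter.IsBoundedUnder (· ≥ ·) ((𝓝 y) ×ˢ (𝓝[>] (0:ℝ)))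
        (fun p : E × ℝ => (f (p.1 + p.2 • d) - f p.1) / p.2) := by
      refine ⟨-((K:ℝ) * ‖d‖), ?_⟩
      rw [Filter.eventually_map]
      filter_upwards [h1, h2, h3] with p hp1 hp2 hp3
      have habs : dist (f (p.1 + p.2 • d)) (f p.1) ≤ (K:ℝ) * dist (p.1 + p.2 • d) p.1 :=
        hK.dist_le_mul _ hp2 _ hp1
      have hdist : dist (p.1 + p.2 • d) p.1 = p.2 * ‖d‖ := by
        rw [dist_eq_norm]
        simp [norm_smul, abs_of_pos (show (0:ℝ) < p.2 from hp3), le_of_lt (show (0:ℝ) < p.2 from hp3)]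
      rw [hdist, Real.dist_eq] at habs
      have hp3' : (0:ℝ) < p.2 := hp3
      rw [ge_iff_le, le_div_iff₀ hp3']
      have := abs_le.1 habs
      nlinarith [this.1, norm_nonneg d, K.coe_nonneg]
    exact hbdd.isCoboundedUnder_le
  refine le_of_forall_pos_le_add (fun η hη => ?_)
  refine Filter.limsup_le_of_le hcobdd ?_
  have h2' : ∀ᶠ p : E × ℝ in (𝓝 y) ×ˢ (𝓝[>] (0:ℝ)), p.1 + d ∈ ball x δ := by
    have ht : Tendsto (fun z : E => z + d) (𝓝 y) (𝓝 (y + d)) :=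
      (continuous_id.add continuous_const).tendsto y
    rw [hyd] at ht
    have hev : ∀ᶠ z in 𝓝 y, z + d ∈ ball x δ :=
      ht.eventually (isOpen_ball.eventually_mem hz')
    exact hev.prod_inl _
  have h4 : ∀ᶠ p : E × ℝ in (𝓝 y) ×ˢ (𝓝[>] (0:ℝ)), f (p.1 + d) - f p.1 ≤ f z' - f y + η := by
    have ht : Tendsto (fun z : E => f (z + d) - f z) (𝓝 y) (𝓝 (f (y + d) - f y)) :=
      ((hfc.comp (continuous_id.add continuous_const)).sub hfc).tendsto y
    rw [hyd] at ht
    have hev : ∀ᶠ z in 𝓝 y, f (z + d) - f z ≤ f z' - f y + η :=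
      ht.eventually (eventually_le_nhds (by linarith))
    exact hev.prod_inl _
  filter_upwards [h1, h2', h3, h4, h5] with p hp1 hp2 hp3 hp4 hp5
  have hp3' : (0:ℝ) < p.2 := hp3
  rw [div_le_iff₀ hp3']
  have hc := hconv (p.1 + d) hp2 p.1 hp1 p.2 ⟨le_of_lt hp3', hp5⟩
  have heq : p.2 • (p.1 + d) + (1 - p.2) • p.1 = p.1 + p.2 • d := by
    module
  have hnorm : ‖p.1 + d - p.1‖ = ‖d‖ := by simp
  rw [heq, hnorm] at hc
  have hdn : (0:ℝ) ≤ ‖d‖ := norm_nonneg d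
  nlinarith [hc, mul_le_mul_of_nonneg_left hp4 (le_of_lt hp3'),
    mul_nonneg (mul_nonneg (mul_nonneg hε hp3'.le) hp3'.le) hdn]

theorem stmt_6 (n : ℕ) (f : EuclideanSpace ℝ (Fin n) → ℝ) (hf : LocallyLipschitz f)
    (x : EuclideanSpace ℝ (Fin n)) (c : ℝ) (hc : 0 < c)
    (hlowerC1 : ∀ ε > (0:ℝ), ∃ δ > (0:ℝ), ∀ y ∈ ball x δ, ∀ z ∈ ball x δ, ∀ t ∈ Icc (0:ℝ) 1,
      f (t • y + (1 - t) • z) ≤ t * f y + (1 - t) * f z + ε * (t * (1 - t)) * ‖y - z‖)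
    (xj yj : ℕ → EuclideanSpace ℝ (Fin n))
    (hxj : Tendsto xj atTop (𝓝 x)) (hyj : Tendsto yj atTop (𝓝 x))
    (hne : ∀ j, yj j ≠ xj j)
    (gj : ℕ → EuclideanSpace ℝ (Fin n))
    (hgj : ∀ j, ∀ d, ⟪gj j, d⟫ ≤ clarkeDeriv f (yj j) d)
    (sj : ℕ → ℝ)
    (hsj : ∀ j, sj j =
      max (f (yj j) + ⟪gj j, xj j - yj j⟫ - f (xj j) + c * ‖yj j - xj j‖ ^ 2) 0)
    (m : ℕ → EuclideanSpace ℝ (Fin n) → ℝ)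
    (hm : ∀ j z, m j z = f (yj j) + ⟪gj j, z - yj j⟫ - sj j) :
    ∃ εj : ℕ → ℝ, (∀ j, 0 < εj j) ∧ Tendsto εj atTop (𝓝 0) ∧
      ∀ j, f (yj j) ≤ m j (yj j) + εj j * ‖yj j - xj j‖ := by
  have hnpos : ∀ j, (0:ℝ) < ‖yj j - xj j‖ := fun j =>
    norm_pos_iff.2 (sub_ne_zero.2 (hne j))
  have hs0 : ∀ j, 0 ≤ sj j := fun j => by rw [hsj j]; exact le_max_right _ _
  -- key estimate
  have key : ∀ ε > (0:ℝ), ∀ᶠ j in atTop, sj j ≤ ε * ‖yj j - xj j‖ := by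
    intro ε hε
    obtain ⟨δ0, hδ0, hconv⟩ := hlowerC1 (ε/2) (by positivity)
    obtain ⟨K, t, ht, hK⟩ := hf x
    obtain ⟨r, hr, hrt⟩ := Metric.mem_nhds_iff.1 ht
    set δ := min δ0 r with hδdef
    have hδ : 0 < δ := lt_min hδ0 hr
    have hK' : LipschitzOnWith K f (ball x δ) :=
      hK.mono ((ball_subset_ball (min_le_right _ _)).trans hrt)
    have hconv' : ∀ y ∈ ball x δ, ∀ z ∈ ball x δ, ∀ t ∈ Icc (0:ℝ) 1,
        f (t • y + (1 - t) • z) ≤ t * f y + (1 - t) * f z + (ε/2) * (t * (1 - t)) * ‖y - z‖ :=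
      fun y hy z hz t ht => hconv y (ball_subset_ball (min_le_left _ _) hy)
        z (ball_subset_ball (min_le_left _ _) hz) t ht
    have hfc : Continuous f := hf.continuous
    have hx' : ∀ᶠ j in atTop, xj j ∈ ball x δ :=
      hxj.eventually (isOpen_ball.eventually_mem (mem_ball_self hδ))
    have hy' : ∀ᶠ j in atTop, yj j ∈ ball x δ :=
      hyj.eventually (isOpen_ball.eventually_mem (mem_ball_self hδ))
    have hsmall : ∀ᶠ j in atTop, c * ‖yj j - xj j‖ ≤ ε / 2 := by
      have h0 : Tendsto (fun j => c * ‖yj j - xj j‖) atTop (𝓝 (c * ‖x - x‖)) :=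
        (tendsto_const_nhds.mul ((hyj.sub hxj).norm))
      simp only [sub_self, norm_zero, mul_zero] at h0
      exact h0.eventually (eventually_le_nhds (by positivity))
    filter_upwards [hx', hy', hsmall] with j hxm hym hsm
    have hg := hgj j (xj j - yj j)
    have hcl := clarke_upper f hfc x δ K hK' (ε/2) (by positivity) hconv'
      (yj j) (xj j) hym hxm
    have hnorm : ‖xj j - yj j‖ = ‖yj j - xj j‖ := norm_sub_rev _ _
    rw [hnorm] at hcl
    have h0 : (0:ℝ) ≤ ‖yj j - xj j‖ := (hnpos j).le
    rw [hsj j]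
    refine max_le ?_ (by positivity)
    have hsq : ‖yj j - xj j‖ ^ 2 = ‖yj j - xj j‖ * ‖yj j - xj j‖ := sq _
    nlinarith [hg.trans hcl, mul_le_mul_of_nonneg_right hsm h0]
  -- the epsilon sequence
  refine ⟨fun j => sj j / ‖yj j - xj j‖ + 1 / (j + 1), ?_, ?_, ?_⟩
  · intro j
    have : (0:ℝ) < 1 / (j + 1) := by positivity
    have h2 : 0 ≤ sj j / ‖yj j - xj j‖ := div_nonneg (hs0 j) (hnpos j).le
    linarith
  · have h1 : Tendsto (fun j : ℕ => sj j / ‖yj j - xj j‖) atTop (𝓝 0) := by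
      refine tendsto_order.2 ⟨fun b hb => ?_, fun b hb => ?_⟩
      · filter_upwards with j
        exact lt_of_lt_of_le hb (div_nonneg (hs0 j) (hnpos j).le)
      · filter_upwards [key (b/2) (by positivity)] with j hj
        have := (div_le_iff₀ (hnpos j)).2 hj
        calc sj j / ‖yj j - xj j‖ ≤ b/2 := by
              rw [div_le_iff₀ (hnpos j)]; linarith [hj]
          _ < b := by linarith
    have h2 : Tendsto (fun j : ℕ => 1 / ((j:ℝ) + 1)) atTop (𝓝 0) :=
      tendsto_one_div_add_atTop_nhds_zero_nat
    have := h1.add h2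
    simpa using this
  · intro j
    rw [hm j (yj j)]
    have hz : yj j - yj j = 0 := sub_self _
    rw [hz, inner_zero_right]
    have hcancel : sj j / ‖yj j - xj j‖ * ‖yj j - xj j‖ = sj j :=
      div_mul_cancel₀ _ (hnpos j).ne'
    have hpos : 0 ≤ 1 / ((j:ℝ) + 1) * ‖yj j - xj j‖ := by positivity
    have : (sj j / ‖yj j - xj j‖ + 1 / (j + 1)) * ‖yj j - xj j‖
        = sj j + 1 / ((j:ℝ) + 1) * ‖yj j - xj j‖ := by
      rw [add_mul, hcancel]
    rw [this]
    linarith [hpos]
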